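/- The following are equivalent: (a) CH, i.e., 2^ℵ₀ ≤ ℵ₁; (b) for all distinct points c₁, c₂ ∈ ℝ² there are sets X₁, X₂ with X₁ ∪ X₂ = ℝ² such that X₁ is a σ-spray with center c₁ and X₂ is a σ-spray with center c₂. -/

import Mathlib

open Cardinal

/-- A σ-spray with center `c`: every sphere centered at `c` meets `X` in a countable set. -/
def IsSigmaSpray {d : ℕ} (c : EuclideanSpace ℝ (Fin d))
    (X : Set (EuclideanSpace ℝ (Fin d))) : Prop :=
  ∀ r : ℝ, {x ∈ X | ‖x - c‖ = r}.Countable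

namespace SpraysAux

open Set

local notation "E2" => EuclideanSpace ℝ (Fin 2)

/-- Two circles with distinct centers meet in at most two points (we only need countably many). -/
lemma two_spheres_countable {c₁ c₂ : E2} (h : c₁ ≠ c₂) (r s : ℝ) :
    {x : E2 | ‖x - c₁‖ = r ∧ ‖x - c₂‖ = s}.Countable := by
  set S := {x : E2 | ‖x - c₁‖ = r ∧ ‖x - c₂‖ = s} with hSdef
  by_cases hsub : S.Subsingleton
  · exact hsub.countable
  rw [Set.not_subsingleton_iff] at hsub
  obtain ⟨x, hx, y, hy, hxy⟩ := hsub
  have key : S ⊆ {x, y} := by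
    intro z hz
    by_contra hzmem
    simp only [Set.mem_insert_iff, Set.mem_singleton_iff, not_or] at hzmem
    obtain ⟨hzx, hzy⟩ := hzmem
    -- any two points of S differ by a vector orthogonal to c₂ - c₁
    have ortho : ∀ u ∈ S, ∀ v ∈ S, v - u ∈ (ℝ ∙ (c₂ - c₁))ᗮ := by
      intro u hu v hv
      rw [Submodule.mem_orthogonal_singleton_iff_inner_right]
      have h1 : dist u c₁ = dist v c₁ := by
        rw [dist_eq_norm, dist_eq_norm, hu.1, hv.1]
      have h2 : dist u c₂ = dist v c₂ := by
        rw [dist_eq_norm, dist_eq_norm, hu.2, hv.2]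
      have := EuclideanGeometry.inner_vsub_vsub_of_dist_eq_of_dist_eq h1 h2
      simpa using this
    have hn : c₂ - c₁ ≠ 0 := sub_ne_zero.mpr h.symm
    have hyx : y - x ≠ 0 := sub_ne_zero.mpr hxy.symm
    -- the orthogonal complement has rank 1
    have hrank : Module.finrank ℝ ((ℝ ∙ (c₂ - c₁))ᗮ : Submodule ℝ E2) = 1 := by
      have h1 := Submodule.finrank_add_finrank_orthogonal (K := (ℝ ∙ (c₂ - c₁)))
      rw [finrank_span_singleton hn, finrank_euclideanSpace_fin] at h1
      omega
    have hspan : (ℝ ∙ (y - x)) = (ℝ ∙ (c₂ - c₁))ᗮ := by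
      apply Submodule.eq_of_le_of_finrank_le
      · rw [Submodule.span_le, Set.singleton_subset_iff]
        exact ortho x hx y hy
      · rw [hrank, finrank_span_singleton hyx]
    obtain ⟨t, ht⟩ := Submodule.mem_span_singleton.mp
      (hspan ▸ ortho x hx z hz)
    -- algebra on the circle around c₁
    have expand : ∀ w : E2, w ∈ S →
        ‖x - c₁‖ ^ 2 + 2 * inner ℝ (x - c₁) (w - x) + ‖w - x‖ ^ 2 = r ^ 2 := by
      intro w hw
      have : (x - c₁) + (w - x) = w - c₁ := by abel
      calc ‖x - c₁‖ ^ 2 + 2 * inner ℝ (x - c₁) (w - x) + ‖w - x‖ ^ 2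
          = ‖(x - c₁) + (w - x)‖ ^ 2 := (norm_add_sq_real _ _).symm
        _ = r ^ 2 := by rw [this, hw.1]
    have e1 := expand y hy
    have e2 := expand z hz
    have hxr : ‖x - c₁‖ = r := hx.1
    rw [hxr] at e1 e2
    have hzy' : z - x = t • (y - x) := ht.symm
    rw [hzy', real_inner_smul_right, norm_smul, mul_pow] at e2
    simp only [Real.norm_eq_abs, sq_abs] at e2
    have ht0 : t ≠ 0 := by
      intro h0
      rw [h0, zero_smul] at hzy'
      exact hzx (sub_eq_zero.mp hzy')
    have ht1 : t ≠ 1 := by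
      intro h1
      rw [h1, one_smul] at hzy'
      exact hzy (sub_left_inj.mp hzy')
    have hd : ‖y - x‖ ^ 2 ≠ 0 := pow_ne_zero 2 (norm_ne_zero_iff.mpr hyx)
    have hfin : ‖y - x‖ ^ 2 * (t * (t - 1)) = 0 := by linear_combination e2 - t * e1
    rcases mul_eq_zero.mp hfin with h' | h'
    · exact hd h'
    · rcases mul_eq_zero.mp h' with h'' | h''
      · exact ht0 h''
      · exact ht1 (by linarith)
  exact (((Set.finite_singleton y).insert x).countable).mono key

/-- CH gives the covering of the plane by two σ-sprays. -/
lemma forward (h : continuum.{0} ≤ aleph.{0} 1) (c₁ c₂ : E2) (hne : c₁ ≠ c₂) :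
    ∃ X₁ X₂ : Set E2, X₁ ∪ X₂ = Set.univ ∧ IsSigmaSpray c₁ X₁ ∧ IsSigmaSpray c₂ X₂ := by
  have hmk : #ℝ ≤ #((aleph 1).ord.ToType) := by
    rw [Cardinal.mk_real, Cardinal.mk_ord_toType]; exact h
  obtain ⟨f⟩ := (Cardinal.le_def _ _).mp hmk
  have hseg : ∀ a : (aleph 1).ord.ToType, (Set.Iic a).Countable := by
    intro a
    have h1 : (Set.Iio a).Countable :=
      (countable_iff_lt_aleph_one _).mpr (Cardinal.mk_Iio_ord_toType a)
    rw [← Set.Iio_union_right]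
    exact h1.union (Set.countable_singleton a)
  refine ⟨{x | f ‖x - c₂‖ ≤ f ‖x - c₁‖}, {x | f ‖x - c₁‖ ≤ f ‖x - c₂‖}, ?_, ?_, ?_⟩
  · ext x
    simp only [Set.mem_union, Set.mem_setOf_eq, Set.mem_univ, iff_true]
    exact le_total _ _
  · intro r
    have hC : {s : ℝ | f s ≤ f r}.Countable :=
      (hseg (f r)).preimage f.injective
    have hsub : {x | x ∈ {x : E2 | f ‖x - c₂‖ ≤ f ‖x - c₁‖} ∧ ‖x - c₁‖ = r} ⊆
        ⋃ s ∈ {s : ℝ | f s ≤ f r}, {x : E2 | ‖x - c₁‖ = r ∧ ‖x - c₂‖ = s} := by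
      rintro x ⟨hx1, hx2⟩
      refine Set.mem_biUnion ?_ ⟨hx2, rfl⟩
      show f ‖x - c₂‖ ≤ f r
      rw [← hx2]
      exact hx1
    exact ((hC.biUnion fun s _ => two_spheres_countable hne r s)).mono hsub
  · intro r
    have hC : {s : ℝ | f s ≤ f r}.Countable :=
      (hseg (f r)).preimage f.injective
    have hsub : {x | x ∈ {x : E2 | f ‖x - c₁‖ ≤ f ‖x - c₂‖} ∧ ‖x - c₂‖ = r} ⊆
        ⋃ s ∈ {s : ℝ | f s ≤ f r}, {x : E2 | ‖x - c₂‖ = r ∧ ‖x - c₁‖ = s} := by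
      rintro x ⟨hx1, hx2⟩
      refine Set.mem_biUnion ?_ ⟨hx2, rfl⟩
      show f ‖x - c₁‖ ≤ f r
      rw [← hx2]
      exact hx1
    exact ((hC.biUnion fun s _ => two_spheres_countable hne.symm r s)).mono hsub

/-- The second center used in the converse direction. -/
noncomputable def cB : E2 := EuclideanSpace.single 0 (2 : ℝ)

/-- Circles of radii in (2,3) around the two chosen centers always meet. -/
lemma circles_meet {r s : ℝ} (hr : r ∈ Set.Ioo (2:ℝ) 3) (hs : s ∈ Set.Ioo (2:ℝ) 3) :
    ∃ x : E2, ‖x - 0‖ = r ∧ ‖x - cB‖ = s := by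
  obtain ⟨hr2, hr3⟩ := hr
  obtain ⟨hs2, hs3⟩ := hs
  set a : ℝ := (4 + r ^ 2 - s ^ 2) / 4 with ha
  have hnn : r ^ 2 - a ^ 2 ≥ 0 := by
    have h1 : s - (r - 2) > 0 := by linarith
    have h2 : s + (r - 2) > 0 := by linarith
    have h3 : (r + 2) - s > 0 := by linarith
    have h4 : (r + 2) + s > 0 := by linarith
    nlinarith [mul_pos h1 h2, mul_pos h3 h4, mul_pos (mul_pos h1 h2) (mul_pos h3 h4)]
  set b : ℝ := Real.sqrt (r ^ 2 - a ^ 2) with hb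
  have hb2 : b ^ 2 = r ^ 2 - a ^ 2 := Real.sq_sqrt hnn
  set x : E2 := (WithLp.equiv 2 (Fin 2 → ℝ)).symm ![a, b] with hx
  have hx0 : x 0 = a := rfl
  have hx1 : x 1 = b := rfl
  have hc0 : cB 0 = 2 := by simp [cB]
  have hc1 : cB 1 = 0 := by simp [cB]
  refine ⟨x, ?_, ?_⟩
  · rw [sub_zero, EuclideanSpace.norm_eq, Fin.sum_univ_two, hx0, hx1]
    rw [Real.norm_eq_abs, Real.norm_eq_abs, sq_abs, sq_abs]
    rw [show a ^ 2 + b ^ 2 = r ^ 2 by rw [hb2]; ring]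
    exact Real.sqrt_sq (by linarith)
  · rw [EuclideanSpace.norm_eq, Fin.sum_univ_two]
    have e0 : (x - cB) 0 = a - 2 := by
      simp [hx0, hc0]
    have e1 : (x - cB) 1 = b := by
      simp [hx1, hc1]
    rw [e0, e1, Real.norm_eq_abs, Real.norm_eq_abs, sq_abs, sq_abs]
    rw [show (a - 2) ^ 2 + b ^ 2 = s ^ 2 by rw [hb2, ha]; ring]
    exact Real.sqrt_sq (by linarith)

/-- A covering by two σ-sprays with the chosen centers yields CH. -/
lemma reverse
    (H : ∃ X₁ X₂ : Set E2, X₁ ∪ X₂ = Set.univ ∧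
      IsSigmaSpray (0 : E2) X₁ ∧ IsSigmaSpray cB X₂) :
    continuum.{0} ≤ aleph.{0} 1 := by
  by_contra hch
  have hlt : aleph.{0} 1 < continuum := not_le.mp hch
  obtain ⟨X₁, X₂, hcover, hs₁, hs₂⟩ := H
  set I : Set ℝ := Set.Ioo 2 3 with hI
  have hImk : #I = continuum := Cardinal.mk_Ioo_real (by norm_num)
  obtain ⟨R, hRI, hRmk⟩ := Cardinal.le_mk_iff_exists_subset.mp (hImk ▸ hlt.le)
  set g : ℝ → Set ℝ := fun r => (fun x : E2 => ‖x - cB‖) '' {x ∈ X₁ | ‖x - 0‖ = r} with hg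
  set A : Set ℝ := ⋃ r ∈ R, g r with hA
  have hAcard : #A ≤ aleph 1 := by
    calc #A ≤ #R * ⨆ r : R, #(g r) := Cardinal.mk_biUnion_le g R
      _ ≤ aleph 1 * ℵ₀ := by
          apply mul_le_mul' hRmk.le
          exact ciSup_le' fun r => ((hs₁ r).image _).le_aleph0
      _ = aleph 1 := by
          rw [Cardinal.mul_eq_max (aleph0_le_aleph 1) le_rfl]
          exact max_eq_left (aleph0_le_aleph 1)
  have hnotsub : ¬ I ⊆ A := by
    intro hsub
    exact absurd (hImk ▸ Cardinal.mk_le_mk_of_subset hsub) (not_le.mpr (hAcard.trans_lt hlt))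
  obtain ⟨s, hsI, hsA⟩ := Set.not_subset.mp hnotsub
  set B : Set ℝ := (fun x : E2 => ‖x - 0‖) '' {x ∈ X₂ | ‖x - cB‖ = s} with hB
  have hBc : B.Countable := (hs₂ s).image _
  have hnotsub2 : ¬ R ⊆ B := by
    intro hsub
    have : R.Countable := hBc.mono hsub
    rw [countable_iff_lt_aleph_one, hRmk] at this
    exact lt_irrefl _ this
  obtain ⟨r, hrR, hrB⟩ := Set.not_subset.mp hnotsub2
  obtain ⟨x, hx1, hx2⟩ := circles_meet (hRI hrR) hsI
  have hxu : x ∈ X₁ ∪ X₂ := hcover ▸ Set.mem_univ x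
  rcases hxu with hx | hx
  · exact hsA (Set.mem_biUnion hrR ⟨x, ⟨hx, hx1⟩, hx2⟩)
  · exact hrB ⟨x, ⟨hx, hx2⟩, hx1⟩

universe u

/-- CH is universe-independent. -/
lemma ch_lift : continuum.{u} ≤ aleph.{u} 1 ↔ continuum.{0} ≤ aleph.{0} 1 := by
  constructor
  · intro h
    rw [← Cardinal.lift_le.{u}, Cardinal.lift_continuum, Cardinal.lift_aleph,
      Ordinal.lift_one]
    exact h
  · intro h
    rw [← Cardinal.lift_le.{u}, Cardinal.lift_continuum, Cardinal.lift_aleph,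
      Ordinal.lift_one] at h
    exact h

end SpraysAux

theorem stmt6 :
    continuum ≤ aleph 1 ↔
      ∀ c₁ c₂ : EuclideanSpace ℝ (Fin 2), c₁ ≠ c₂ →
        ∃ X₁ X₂ : Set (EuclideanSpace ℝ (Fin 2)),
          X₁ ∪ X₂ = Set.univ ∧ IsSigmaSpray c₁ X₁ ∧ IsSigmaSpray c₂ X₂ := by
  rw [SpraysAux.ch_lift]
  constructor
  · intro h c₁ c₂ hne
    exact SpraysAux.forward h c₁ c₂ hne
  · intro H
    apply SpraysAux.reverse
    apply H
    intro h0
    have h1 : (0 : EuclideanSpace ℝ (Fin 2)) 0 = SpraysAux.cB 0 := by rw [h0]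
    simp [SpraysAux.cB] at h1
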